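/- Let p be an odd prime and e ≥ 1 an integer. The number of odd integers m with 1 ≤ m ≤ p^e such that gcd(m, p) = 1 and gcd((m−1)/2, p) = 1 equals (p^e − 2p^{e−1} − 1)/2, i.e. T(p^e) = (S(p^e) − 1)/2. -/

import Mathlib

/-- `T(n) = #{ m odd : 1 ≤ m ≤ n, gcd(m,n) = 1, gcd((m−1)/2, n) = 1 }`. -/
def Tcount (n : ℕ) : ℕ :=
  ((Finset.Icc 1 n).filter
    (fun m => m % 2 = 1 ∧ Nat.gcd m n = 1 ∧ Nat.gcd ((m - 1) / 2) n = 1)).card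

lemma Tcount_key (p q : ℕ) (hp3 : 3 ≤ p) (hpodd : p % 2 = 1) (hqodd : q % 2 = 1)
    (hq1 : 1 ≤ q) (hgcd : ∀ m : ℕ, Nat.gcd m (p * q) = 1 ↔ ¬ p ∣ m) :
    Tcount (p * q) = (p * q - 2 * q - 1) / 2 := by
  classical
  have hnodd : (p * q) % 2 = 1 := by rw [Nat.mul_mod, hpodd, hqodd]
  have hn3q : 3 * q ≤ p * q := Nat.mul_le_mul_right q hp3
  -- Step A: bijection to counting k = (m-1)/2
  have hA : Tcount (p * q) =
      ((Finset.range ((p * q + 1) / 2)).filter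
        (fun k => ¬ p ∣ (2 * k + 1) ∧ ¬ p ∣ k)).card := by
    unfold Tcount
    apply Finset.card_nbij' (fun m => (m - 1) / 2) (fun k => 2 * k + 1)
    · intro m hm
      simp only [Finset.mem_coe, Finset.mem_filter, Finset.mem_Icc] at hm ⊢
      obtain ⟨⟨h1, h2⟩, hmo, hg1, hg2⟩ := hm
      simp only [Finset.mem_range]
      refine ⟨by omega, ?_, ?_⟩
      · rw [show 2 * ((m - 1) / 2) + 1 = m by omega]
        exact (hgcd m).mp hg1
      · exact (hgcd _).mp hg2
    · intro k hk
      simp only [Finset.mem_coe, Finset.mem_filter, Finset.mem_range] at hk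
      obtain ⟨hkK, h1, h2⟩ := hk
      simp only [Finset.mem_coe, Finset.mem_filter, Finset.mem_Icc]
      refine ⟨⟨by omega, by omega⟩, by omega, (hgcd _).mpr h1, ?_⟩
      rw [show (2 * k + 1 - 1) / 2 = k by omega]
      exact (hgcd _).mpr h2
    · intro m hm
      simp only [Finset.mem_coe, Finset.mem_filter, Finset.mem_Icc] at hm
      dsimp only
      omega
    · intro k _
      dsimp only
      omega
  rw [hA]
  -- Step B: split off the bad sets
  have hdisj : Disjoint
      ((Finset.range ((p * q + 1) / 2)).filter (fun k => p ∣ (2 * k + 1)))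
      ((Finset.range ((p * q + 1) / 2)).filter (fun k => p ∣ k)) := by
    rw [Finset.disjoint_left]
    intro k hk1 hk2
    simp only [Finset.mem_filter] at hk1 hk2
    have h2 : p ∣ 2 * k := Dvd.dvd.mul_left hk2.2 2
    have h1 : p ∣ 1 := by simpa using Nat.dvd_sub hk1.2 h2
    have := Nat.le_of_dvd one_pos h1
    omega
  have hsplit : ((Finset.range ((p * q + 1) / 2)).filter
        (fun k => ¬ p ∣ (2 * k + 1) ∧ ¬ p ∣ k)).card
      = (p * q + 1) / 2 -
        (((Finset.range ((p * q + 1) / 2)).filter (fun k => p ∣ (2 * k + 1))).card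
          + ((Finset.range ((p * q + 1) / 2)).filter (fun k => p ∣ k)).card) := by
    rw [← Finset.card_union_of_disjoint hdisj, ← Finset.filter_or]
    have heq : (Finset.range ((p * q + 1) / 2)).filter
          (fun k => ¬ p ∣ (2 * k + 1) ∧ ¬ p ∣ k)
        = (Finset.range ((p * q + 1) / 2)).filter
          (fun k => ¬ (p ∣ (2 * k + 1) ∨ p ∣ k)) := by
      apply Finset.filter_congr
      intro k _
      constructor
      · rintro ⟨a, b⟩ (h | h) <;> [exact a h; exact b h]
      · intro h; exact ⟨fun h1 => h (Or.inl h1), fun h2 => h (Or.inr h2)⟩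
    rw [heq, Finset.filter_not, Finset.card_sdiff_of_subset (Finset.filter_subset _ _),
      Finset.card_range]
  rw [hsplit]
  -- count multiples of p among k < (pq+1)/2
  have hC2 : ((Finset.range ((p * q + 1) / 2)).filter (fun k => p ∣ k)).card
      = (q + 1) / 2 := by
    have himg : (Finset.range ((p * q + 1) / 2)).filter (fun k => p ∣ k)
        = (Finset.range ((q + 1) / 2)).image (fun j => p * j) := by
      ext k
      simp only [Finset.mem_filter, Finset.mem_range, Finset.mem_image]
      constructor
      · rintro ⟨hk, j, rfl⟩
        refine ⟨j, ?_, rfl⟩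
        have h1 : 2 * (p * j) ≤ p * q := by omega
        have h2 : p * (2 * j) ≤ p * q := by nlinarith
        have h3 : 2 * j ≤ q := Nat.le_of_mul_le_mul_left h2 (by omega)
        omega
      · rintro ⟨j, hj, rfl⟩
        refine ⟨?_, Dvd.intro j rfl⟩
        have h1 : 2 * j + 1 ≤ q := by omega
        have h2 : p * (2 * j + 1) ≤ p * q := Nat.mul_le_mul_left p h1
        have h3 : 2 * (p * j) + p ≤ p * q := by nlinarith
        omega
    rw [himg, Finset.card_image_of_injective _ (fun a b h =>
      Nat.eq_of_mul_eq_mul_left (by omega) h), Finset.card_range]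
  -- count k with p ∣ 2k+1
  have hC1 : ((Finset.range ((p * q + 1) / 2)).filter (fun k => p ∣ (2 * k + 1))).card
      = (q + 1) / 2 := by
    have himg : (Finset.range ((p * q + 1) / 2)).filter (fun k => p ∣ (2 * k + 1))
        = (Finset.range ((q + 1) / 2)).image (fun s => p * s + (p - 1) / 2) := by
      ext k
      simp only [Finset.mem_filter, Finset.mem_range, Finset.mem_image]
      constructor
      · rintro ⟨hk, t, ht⟩
        have hto : t % 2 = 1 := by
          rcases Nat.even_or_odd t with h | h
          · exfalso
            obtain ⟨c, hc⟩ := h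
            rw [hc] at ht
            have : p * (c + c) = 2 * (p * c) := by ring
            omega
          · exact Nat.odd_iff.mp h
        obtain ⟨s, hs⟩ : ∃ s, t = 2 * s + 1 := ⟨t / 2, by omega⟩
        rw [hs] at ht
        have hkey : p * (2 * s + 1) = 2 * (p * s) + p := by ring
        refine ⟨s, ?_, by omega⟩
        have h2 : 2 * (p * s) + p ≤ p * q := by omega
        have h3 : p * (2 * s + 1) ≤ p * q := by omega
        have h4 : 2 * s + 1 ≤ q := Nat.le_of_mul_le_mul_left h3 (by omega)
        omega
      · rintro ⟨s, hs, rfl⟩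
        have hkey : p * (2 * s + 1) = 2 * (p * s) + p := by ring
        constructor
        · have h1 : 2 * s + 1 ≤ q := by omega
          have h2 : p * (2 * s + 1) ≤ p * q := Nat.mul_le_mul_left p h1
          omega
        · exact ⟨2 * s + 1, by omega⟩
    rw [himg, Finset.card_image_of_injective _ (fun a b h =>
      Nat.eq_of_mul_eq_mul_left (show 0 < p by omega)
        (show p * a = p * b by omega)), Finset.card_range]
  rw [hC1, hC2]
  omega

/-- For `p` an odd prime and `e ≥ 1`, `T(p^e) = (p^e − 2p^(e−1) − 1)/2 = (S(p^e) − 1)/2`. -/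
theorem stmt_19 (p : ℕ) (hp : p.Prime) (hodd : p ≠ 2) (e : ℕ) (he : 1 ≤ e) :
    Tcount (p ^ e) = (p ^ e - 2 * p ^ (e - 1) - 1) / 2 := by
  have hp2 := hp.two_le
  have hpodd : p % 2 = 1 := Nat.odd_iff.mp (hp.odd_of_ne_two hodd)
  have hp3 : 3 ≤ p := by omega
  have hq1 : 1 ≤ p ^ (e - 1) := Nat.one_le_pow _ _ (by omega)
  have hqodd : p ^ (e - 1) % 2 = 1 := Nat.odd_iff.mp (Odd.pow (hp.odd_of_ne_two hodd))
  have hpq : p ^ e = p * p ^ (e - 1) := by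
    rw [← pow_succ']
    congr 1
    omega
  rw [hpq]
  refine Tcount_key p (p ^ (e - 1)) hp3 hpodd hqodd hq1 ?_
  intro m
  rw [← hpq]
  have h1 : Nat.Coprime m (p ^ e) ↔ Nat.Coprime m p :=
    Nat.coprime_pow_right_iff (by omega) m p
  rw [show (Nat.gcd m (p ^ e) = 1) = Nat.Coprime m (p ^ e) from rfl, h1,
    Nat.coprime_comm]
  exact hp.coprime_iff_not_dvd
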